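/- Let M be a Hausdorff topological space and k a natural number. Let OConf_k(M) = {f : Fin k → M | Function.Injective f} with the subspace topology, acted on by S_k = Equiv.Perm (Fin k) via σ • f = f ∘ σ⁻¹, and let UConf_k(M) be the quotient topological space by this action with quotient map q_k. Then q_k : OConf_k(M) → UConf_k(M) is a covering map (IsCoveringMap). -/

import Mathlib

open Set Topology

section General

variable {G E : Type*} [Group G] [TopologicalSpace G] [DiscreteTopology G]
  [TopologicalSpace E] [MulAction G E] [ContinuousConstSMul G E]

theorem isCoveringMap_quotient_of_wandering
    (hw : ∀ e : E, ∃ V : Set E, IsOpen V ∧ e ∈ V ∧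
      ∀ σ : G, σ ≠ 1 → Disjoint ((σ • ·) '' V) V) :
    IsCoveringMap (Quotient.mk (MulAction.orbitRel G E)) := by
  classical
  set q : E → Quotient (MulAction.orbitRel G E) := Quotient.mk _ with hqdef
  have qcont : Continuous q := continuous_quot_mk
  have qopen : IsOpenMap q := MulAction.isOpenQuotientMap_quotientMk.isOpenMap
  have q_smul : ∀ (σ : G) (w : E), q (σ • w) = q w :=
    fun σ w => Quotient.sound (MulAction.mem_orbit w σ)
  intro x
  apply IsEvenlyCovered.to_isEvenlyCovered_preimage (I := G)
  obtain ⟨e, rfl⟩ := Quotient.exists_rep x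
  obtain ⟨V, hVo, heV, hdisj⟩ := hw e
  have key : ∀ (σ τ : G) (v : E), σ⁻¹ • v ∈ V → τ⁻¹ • v ∈ V → σ = τ := by
    intro σ τ v hσ hτ
    by_contra hne
    have h1 : σ⁻¹ * τ ≠ 1 := fun h => hne (by
      have := congrArg (σ * ·) h
      simpa [mul_assoc] using this.symm)
    exact (hdisj _ h1).ne_of_mem
      ⟨τ⁻¹ • v, hτ, by show (σ⁻¹ * τ) • τ⁻¹ • v = σ⁻¹ • v; rw [smul_smul, mul_inv_cancel_right]⟩ hσ rfl
  have keyV : ∀ v w : E, v ∈ V → w ∈ V → q v = q w → v = w := by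
    intro v w hv hw hqvw
    obtain ⟨σ, rfl⟩ := MulAction.mem_orbit_iff.mp (Quotient.exact hqvw)
    rcases eq_or_ne σ 1 with rfl | hσ
    · simp
    · exact absurd rfl ((hdisj σ hσ).ne_of_mem ⟨w, hw, rfl⟩ hv)
  set c : E → G := fun v => if h : ∃ σ : G, σ⁻¹ • v ∈ V then h.choose else 1 with hcdef
  have c_spec : ∀ (σ : G) (v : E), σ⁻¹ • v ∈ V → c v = σ := by
    intro σ v h
    have hex : ∃ σ : G, σ⁻¹ • v ∈ V := ⟨σ, h⟩
    have h2 := hex.choose_spec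
    rw [hcdef]
    simp only [dif_pos hex]
    exact key _ _ _ h2 h
  set s : Quotient (MulAction.orbitRel G E) → E :=
    fun u => if h : ∃ v, v ∈ V ∧ q v = u then h.choose else e with hsdef
  have hsV : ∀ v, v ∈ V → s (q v) = v := by
    intro v hv
    have hex : ∃ w, w ∈ V ∧ q w = q v := ⟨v, hv, rfl⟩
    have h2 := hex.choose_spec
    rw [hsdef]
    simp only [dif_pos hex]
    exact keyV _ _ h2.1 hv h2.2
  have s_spec : ∀ u, u ∈ q '' V → s u ∈ V ∧ q (s u) = u := by
    rintro u ⟨v, hv, rfl⟩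
    rw [hsV v hv]
    exact ⟨hv, rfl⟩
  have hsat : q ⁻¹' (q '' V) = ⋃ σ : G, (σ • ·) '' V :=
    MulAction.quotient_preimage_image_eq_union_mul V
  have mem_src : ∀ v : E, v ∈ q ⁻¹' (q '' V) ↔ ∃ σ : G, σ⁻¹ • v ∈ V := by
    intro v
    rw [hsat, mem_iUnion]
    constructor
    · rintro ⟨σ, w, hw, rfl⟩
      exact ⟨σ, by simpa using hw⟩
    · rintro ⟨σ, h⟩
      exact ⟨σ, σ⁻¹ • v, h, smul_inv_smul _ _⟩
  have scont : ContinuousOn s (q '' V) := by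
    rw [continuousOn_iff']
    intro t ht
    refine ⟨q '' (t ∩ V), qopen _ (ht.inter hVo), ?_⟩
    ext u
    constructor
    · rintro ⟨hst, v, hv, rfl⟩
      rw [mem_preimage, hsV v hv] at hst
      exact ⟨⟨v, ⟨hst, hv⟩, rfl⟩, ⟨v, hv, rfl⟩⟩
    · rintro ⟨⟨v, ⟨hvt, hvV⟩, rfl⟩, -⟩
      exact ⟨by rw [mem_preimage, hsV v hvV]; exact hvt, ⟨v, hvV, rfl⟩⟩
  refine IsEvenlyCovered.of_trivialization (t := {
      toFun := fun v => (q v, c v)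
      invFun := fun p => p.2 • s p.1
      source := q ⁻¹' (q '' V)
      target := (q '' V) ×ˢ univ
      map_source' := fun v hv => ⟨hv, mem_univ _⟩
      map_target' := ?_
      left_inv' := ?_
      right_inv' := ?_
      open_source := ?_
      open_target := (qopen V hVo).prod isOpen_univ
      continuousOn_toFun := ?_
      continuousOn_invFun := ?_
      baseSet := q '' V
      open_baseSet := qopen V hVo
      source_eq := rfl
      target_eq := rfl
      proj_toFun := fun _ _ => rfl }) ⟨e, heV, rfl⟩
  · rintro ⟨u, σ⟩ ⟨hu, -⟩
    show σ • s u ∈ q ⁻¹' (q '' V)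
    rw [mem_preimage, q_smul, (s_spec u hu).2]
    exact hu
  · intro v hv
    obtain ⟨σ, hσ⟩ := (mem_src v).1 hv
    show c v • s (q v) = v
    rw [c_spec σ v hσ, ← q_smul σ⁻¹ v, hsV _ hσ, smul_inv_smul]
  · rintro ⟨u, σ⟩ ⟨hu, -⟩
    show (q (σ • s u), c (σ • s u)) = (u, σ)
    rw [q_smul, (s_spec u hu).2, c_spec σ _ (by rw [inv_smul_smul]; exact (s_spec u hu).1)]
  · intro v hv
    obtain ⟨σ, hσ⟩ := (mem_src v).1 hv
    apply ContinuousWithinAt.mono_of_mem_nhdsWithin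
    swap
    · exact self_mem_nhdsWithin
    apply ContinuousAt.continuousWithinAt
    have hW : (σ • ·) '' V ∈ 𝓝 v :=
      (isOpenMap_smul σ V hVo).mem_nhds ⟨σ⁻¹ • v, hσ, smul_inv_smul _ _⟩
    have heq : (fun w => (q w, c w)) =ᶠ[𝓝 v] fun w => (q w, σ) := by
      filter_upwards [hW] with w hw
      obtain ⟨z, hz, rfl⟩ := hw
      rw [c_spec σ _ (by simpa using hz)]
    exact ContinuousAt.congr ((qcont.prodMk continuous_const).continuousAt) heq.symm
  · rintro ⟨u, σ⟩ ⟨hu, -⟩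
    have base : ContinuousOn (fun p : Quotient (MulAction.orbitRel G E) × G => σ • s p.1)
        ((q '' V) ×ˢ univ) :=
      (continuous_const_smul σ).comp_continuousOn
        (scont.comp continuousOn_fst fun p hp => hp.1)
    have hN : (univ : Set (Quotient (MulAction.orbitRel G E))) ×ˢ ({σ} : Set G)
        ∈ 𝓝[(q '' V) ×ˢ (univ : Set G)] (u, σ) :=
      mem_nhdsWithin_of_mem_nhds
        ((isOpen_univ.prod (isOpen_discrete {σ})).mem_nhds (by simp))
    refine (base (u, σ) ⟨hu, mem_univ _⟩).congr_of_eventuallyEq ?_ rfl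
    filter_upwards [hN] with p hp
    rw [show p.2 = σ from hp.2]
  · have h2 : IsOpen (⋃ σ : G, (σ • ·) '' V) := isOpen_iUnion fun σ => isOpenMap_smul σ V hVo
    rw [← hsat] at h2
    exact h2

end General





/-- The ordered configuration space of `k` points of `M`: injective tuples,
with the subspace topology of the product space `Fin k → M`. -/
abbrev OConf (M : Type*) (k : ℕ) : Type _ := {f : Fin k → M // Function.Injective f}

/-- The symmetric group `S_k` acts on ordered configurations by precomposition,
`σ • f = f ∘ σ⁻¹`. -/
instance OConf.instSMul (M : Type*) (k : ℕ) : SMul (Equiv.Perm (Fin k)) (OConf M k) :=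
  ⟨fun σ f => ⟨f.1 ∘ ⇑σ⁻¹, f.2.comp (Equiv.injective _)⟩⟩

instance OConf.instMulAction (M : Type*) (k : ℕ) :
    MulAction (Equiv.Perm (Fin k)) (OConf M k) where
  one_smul f := Subtype.ext rfl
  mul_smul σ τ f := Subtype.ext rfl

/-- The unordered configuration space of `k` points of `M`: the quotient of the ordered
configuration space by the action of the symmetric group, with the quotient topology. -/
abbrev UConf (M : Type*) (k : ℕ) : Type _ :=
  Quotient (MulAction.orbitRel (Equiv.Perm (Fin k)) (OConf M k))

/-- For a Hausdorff space `M`, the quotient map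
`q_k : OConf_k(M) → UConf_k(M)` is a covering map. -/
instance OConf.instContinuousConstSMul (M : Type*) [TopologicalSpace M] (k : ℕ) :
    ContinuousConstSMul (Equiv.Perm (Fin k)) (OConf M k) where
  continuous_const_smul σ := by
    apply Continuous.subtype_mk
    exact continuous_pi fun i => (continuous_apply ((σ⁻¹ : Equiv.Perm (Fin k)) i)).comp
      continuous_subtype_val


theorem uconf_quotient_isCoveringMap (M : Type*) [TopologicalSpace M] [T2Space M] (k : ℕ) :
    IsCoveringMap
      (Quotient.mk (MulAction.orbitRel (Equiv.Perm (Fin k)) (OConf M k)) :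
        OConf M k → UConf M k) := by
  classical
  letI : TopologicalSpace (Equiv.Perm (Fin k)) := ⊥
  haveI : DiscreteTopology (Equiv.Perm (Fin k)) := ⟨rfl⟩
  apply isCoveringMap_quotient_of_wandering
  intro f
  have sep : ∀ i j : Fin k, i ≠ j → ∃ u v : Set M,
      IsOpen u ∧ IsOpen v ∧ f.1 i ∈ u ∧ f.1 j ∈ v ∧ Disjoint u v :=
    fun i j hij => t2_separation (f.2.ne hij)
  choose! A B hA hB hfA hfB hAB using sep
  set U : Fin k → Set M := fun i => ⋂ j, ⋂ (_ : j ≠ i), (A i j ∩ B j i) with hU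
  have hUo : ∀ i, IsOpen (U i) :=
    fun i => isOpen_iInter_of_finite fun j => isOpen_iInter_of_finite fun hj =>
      (hA i j (Ne.symm hj)).inter (hB j i hj)
  have hfU : ∀ i, f.1 i ∈ U i := fun i =>
    Set.mem_iInter.2 fun j => Set.mem_iInter.2 fun hj =>
      ⟨hfA i j (Ne.symm hj), hfB j i hj⟩
  have hUdisj : ∀ i j, i ≠ j → Disjoint (U i) (U j) := by
    intro i j hij
    refine Set.disjoint_left.2 fun m hmi hmj => ?_
    have h1 : m ∈ A i j := (Set.mem_iInter.1 (Set.mem_iInter.1 hmi j) (Ne.symm hij)).1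
    have h2 : m ∈ B i j := (Set.mem_iInter.1 (Set.mem_iInter.1 hmj i) hij).2
    exact (hAB i j hij).ne_of_mem h1 h2 rfl
  refine ⟨{g : OConf M k | ∀ i, g.1 i ∈ U i}, ?_, fun i => hfU i, ?_⟩
  · have heq : {g : OConf M k | ∀ i, g.1 i ∈ U i}
        = ⋂ i, (fun g : OConf M k => g.1 i) ⁻¹' (U i) := by
      ext g; simp [Set.mem_iInter]
    rw [heq]
    exact isOpen_iInter_of_finite fun i =>
      (hUo i).preimage ((continuous_apply i).comp continuous_subtype_val)
  · intro σ hσ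
    refine Set.disjoint_left.2 ?_
    rintro g ⟨h, hh, rfl⟩ hgV
    obtain ⟨i, hi⟩ : ∃ i, (σ⁻¹ : Equiv.Perm (Fin k)) i ≠ i := by
      by_contra hc
      push_neg at hc
      exact hσ (inv_eq_one.mp (Equiv.ext fun i => hc i))
    have h1 : h.1 ((σ⁻¹ : Equiv.Perm (Fin k)) i) ∈ U ((σ⁻¹ : Equiv.Perm (Fin k)) i) := hh _
    have h2 : h.1 ((σ⁻¹ : Equiv.Perm (Fin k)) i) ∈ U i := hgV i
    exact (hUdisj _ _ hi).ne_of_mem h1 h2 rfl
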